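/- For m = 3k > 8 with positive integers b_1,...,b_m summing to kT, consider the (k+1)-agent 3-partition reduction instance (agent 0 values each g_j at (2m/3)T, d_1 at T, d_2 at (m/3 - 1)T; each agent i in [k] values g_j at b_j and d_1, d_2 at (m^2/3)T). In every EQ1 allocation A satisfying v_0(A_0) >= (1/k) * sum over i in [k] of v_i(A_i), agent 0 receives both goods d_1 and d_2. -/

import Mathlib

open Finset

/-- An allocation is a partition of the goods among the agents. -/
def isPartition {ι γ : Type*} [Fintype ι] [Fintype γ] [DecidableEq γ]
    (A : ι → Finset γ) : Prop :=
  (∀ i j, i ≠ j → Disjoint (A i) (A j)) ∧ Finset.univ.biUnion A = Finset.univ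

/-- Additive value of a bundle. -/
def bundleVal {γ : Type*} (v : γ → ℚ) (S : Finset γ) : ℚ := ∑ g ∈ S, v g

/-- EQ1: for every pair of agents `i, j` with `A i` nonempty, some good can be
removed from `A i` so that `i`'s value drops to at most `j`'s value. -/
def EQ1 {ι γ : Type*} [DecidableEq γ] (v : ι → γ → ℚ) (A : ι → Finset γ) : Prop :=
  ∀ i j, A i ≠ ∅ → ∃ g ∈ A i, bundleVal (v i) ((A i).erase g) ≤ bundleVal (v j) (A j)

/-- Valuations of the strong-NP-hardness reduction (with `m = 3k`): agent 0 is
`none`, agents `1, …, k` are `some i`; goods are `g_1, …, g_m` (`Sum.inl`) plus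
`d_1 = Sum.inr 0` and `d_2 = Sum.inr 1`.  Agent 0 values each `g_j` at
`(2m/3)T = 2kT`, `d_1` at `T` and `d_2` at `(m/3 - 1)T = (k-1)T`; each agent
`i ∈ [k]` values `g_j` at `b_j` and `d_1, d_2` at `(m²/3)T = 3k²T`. -/
def vStrong (k : ℕ) (T : ℤ) (b : Fin (3 * k) → ℤ) :
    Option (Fin k) → (Fin (3 * k) ⊕ Fin 2) → ℚ :=
  fun i g =>
    match i, g with
    | none, Sum.inl _ => 2 * (k : ℚ) * (T : ℚ)
    | none, Sum.inr 0 => (T : ℚ)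
    | none, Sum.inr 1 => ((k : ℚ) - 1) * (T : ℚ)
    | some _, Sum.inl j => (b j : ℚ)
    | some _, Sum.inr _ => 3 * (k : ℚ) ^ 2 * (T : ℚ)

/-- in the strong reduction instance (with `m = 3k > 8`), every
EQ1 allocation `A` with `v₀(A₀) ≥ (1/k) ∑_{i ∈ [k]} v_i(A_i)` gives both `d₁`
and `d₂` to agent 0. -/
theorem stmt8 (k : ℕ) (hk : 8 < 3 * k) (T : ℤ) (b : Fin (3 * k) → ℤ)
    (hb : ∀ i, 0 < b i) (hsum : ∑ i, b i = k * T)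
    (A : Option (Fin k) → Finset (Fin (3 * k) ⊕ Fin 2))
    (hpart : isPartition A) (heq1 : EQ1 (vStrong k T b) A)
    (hrich : bundleVal (vStrong k T b none) (A none) ≥
      (1 / (k : ℚ)) * ∑ i : Fin k, bundleVal (vStrong k T b (some i)) (A (some i))) :
    Sum.inr 0 ∈ A none ∧ Sum.inr 1 ∈ A none := by
  obtain ⟨hdisj, hcover⟩ := hpart
  set v := vStrong k T b with hv
  have hk3 : 3 ≤ k := by omega
  have hK : (3:ℚ) ≤ (k:ℚ) := by exact_mod_cast hk3
  have hK0 : (0:ℚ) < (k:ℚ) := by linarith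
  have hT3 : (3:ℤ) ≤ T := by
    have h1 : (3*k : ℤ) ≤ ∑ i, b i := by
      calc (3*k:ℤ) = ∑ _i : Fin (3*k), (1:ℤ) := by simp
        _ ≤ ∑ i, b i := Finset.sum_le_sum (fun i _ => hb i)
    rw [hsum] at h1
    nlinarith [hk3]
  have hTQ : (3:ℚ) ≤ (T:ℚ) := by exact_mod_cast hT3
  have hT0 : (0:ℚ) < (T:ℚ) := by linarith
  -- every value is nonnegative
  have hvnn : ∀ i g, 0 ≤ v i g := by
    rintro (_|i) (j|x)
    · simp only [hv, vStrong]; positivity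
    · fin_cases x <;> simp only [hv, vStrong] <;> nlinarith
    · simp only [hv, vStrong]; exact_mod_cast (hb j).le
    · simp only [hv, vStrong]; positivity
  have hbnn : ∀ i S, 0 ≤ bundleVal (v i) S := fun i S =>
    Finset.sum_nonneg (fun g _ => hvnn i g)
  -- each dummy good has a unique holder
  have holder : ∀ x : Fin 2, ∃ i, Sum.inr x ∈ A i := by
    intro x
    have : (Sum.inr x : Fin (3*k) ⊕ Fin 2) ∈ Finset.univ.biUnion A := by
      rw [hcover]; exact mem_univ _
    simpa using this
  have holder_unique : ∀ (x : Fin 2) (i j : Option (Fin k)),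
      Sum.inr x ∈ A i → Sum.inr x ∈ A j → i = j := by
    intro x i j hi hj
    by_contra hne
    exact (Finset.disjoint_left.1 (hdisj i j hne)) hi hj
  obtain ⟨h1, hh1⟩ := holder 0
  obtain ⟨h2, hh2⟩ := holder 1
  -- an agent in [k] holding no dummy good
  obtain ⟨j, hj1, hj2⟩ : ∃ j : Fin k, some j ≠ h1 ∧ some j ≠ h2 := by
    by_contra hcon
    push_neg at hcon
    -- the map sending j to whether some j = h1 would force k ≤ 2
    have hsub : (Finset.univ.image (some : Fin k → Option (Fin k))) ⊆ {h1, h2} := by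
      intro o ho
      simp only [Finset.mem_image] at ho
      obtain ⟨j, _, rfl⟩ := ho
      rcases eq_or_ne (some j) h1 with h | h
      · simp [h]
      · simp [hcon j h]
    have hcard := Finset.card_le_card hsub
    rw [Finset.card_image_of_injective _ (Option.some_injective _)] at hcard
    simp only [Finset.card_univ, Fintype.card_fin] at hcard
    have : ({h1, h2} : Finset (Option (Fin k))).card ≤ 2 :=
      Finset.card_insert_le _ _ |>.trans (by simp)
    omega
  have hjd : ∀ x : Fin 2, Sum.inr x ∉ A (some j) := by
    intro x hx
    fin_cases x
    · exact hj1 (holder_unique 0 _ _ hx hh1)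
    · exact hj2 (holder_unique 1 _ _ hx hh2)
  -- agent j's bundle consists only of left goods, so its value is at most kT
  have hjub : bundleVal (v (some j)) (A (some j)) ≤ (k:ℚ) * T := by
    have hsubset : A (some j) ⊆ Finset.univ.image Sum.inl := by
      rintro (a|x) hg
      · exact Finset.mem_image.2 ⟨a, mem_univ a, rfl⟩
      · exact absurd hg (hjd x)
    have hle : bundleVal (v (some j)) (A (some j)) ≤
        bundleVal (v (some j)) (Finset.univ.image Sum.inl) :=
      Finset.sum_le_sum_of_subset_of_nonneg hsubset (fun g _ _ => hvnn _ g)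
    have heq : bundleVal (v (some j)) (Finset.univ.image Sum.inl) = (k:ℚ) * T := by
      rw [bundleVal, Finset.sum_image (fun a _ a' _ h => Sum.inl_injective h)]
      have : ∀ a : Fin (3*k), v (some j) (Sum.inl a) = (b a : ℚ) := fun a => rfl
      rw [Finset.sum_congr rfl (fun a _ => this a)]
      exact_mod_cast hsum
    linarith
  -- main argument: both dummies must go to agent 0
  suffices H : ∀ x : Fin 2, Sum.inr x ∈ A none by exact ⟨H 0, H 1⟩
  intro x
  by_contra hx
  obtain ⟨i0, hi0⟩ := holder x
  obtain ⟨istar, rfl⟩ : ∃ i', i0 = some i' := by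
    cases i0 with
    | none => exact absurd hi0 hx
    | some i' => exact ⟨i', rfl⟩
  -- lower bound on the rich condition
  have hdval : v (some istar) (Sum.inr x) = 3 * (k:ℚ)^2 * T := rfl
  have hstar : 3 * (k:ℚ)^2 * T ≤ bundleVal (v (some istar)) (A (some istar)) := by
    have := Finset.single_le_sum (f := v (some istar)) (fun g _ => hvnn _ g) hi0
    rwa [hdval] at this
  have hsumlb : 3 * (k:ℚ)^2 * T ≤ ∑ i : Fin k, bundleVal (v (some i)) (A (some i)) :=
    hstar.trans (Finset.single_le_sum (fun i _ => hbnn (some i) _) (mem_univ istar))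
  have hrich' : 3 * (k:ℚ) * T ≤ bundleVal (v none) (A none) := by
    have h2 : (1/(k:ℚ)) * (3 * (k:ℚ)^2 * T) ≤
        (1/(k:ℚ)) * ∑ i : Fin k, bundleVal (v (some i)) (A (some i)) := by
      apply mul_le_mul_of_nonneg_left hsumlb
      positivity
    have h3 : (1/(k:ℚ)) * (3 * (k:ℚ)^2 * T) = 3 * (k:ℚ) * T := by
      field_simp
    rw [h3] at h2
    exact h2.trans hrich
  -- split agent 0's bundle
  set L := (A none).filter (fun g => g.isLeft) with hL
  have hLval : ∀ g ∈ L, v none g = 2 * (k:ℚ) * T := by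
    intro g hg
    rw [hL, Finset.mem_filter] at hg
    obtain ⟨a, rfl⟩ := Sum.isLeft_iff.1 hg.2
    rfl
  have hLsum : ∀ S : Finset (Fin (3*k) ⊕ Fin 2), S ⊆ L →
      bundleVal (v none) S = S.card * (2 * (k:ℚ) * T) := by
    intro S hS
    rw [bundleVal, Finset.sum_congr rfl (fun g hg => hLval g (hS hg)),
      Finset.sum_const, nsmul_eq_mul]
  -- upper bound on agent 0's bundle value
  have hub : bundleVal (v none) (A none) ≤ L.card * (2 * (k:ℚ) * T) + ((k:ℚ) - 1) * T := by
    have hsplit : bundleVal (v none) (A none) =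
        bundleVal (v none) L + bundleVal (v none) ((A none).filter (fun g => ¬ g.isLeft)) := by
      rw [bundleVal, bundleVal, bundleVal, hL, Finset.sum_filter_add_sum_filter_not]
    have hRsub : (A none).filter (fun g => ¬ g.isLeft) ⊆ {Sum.inr (x + 1)} := by
      intro g hg
      rw [Finset.mem_filter] at hg
      rcases g with a | y
      · simp at hg
      · have hy : y ≠ x := fun h => hx (h ▸ hg.1)
        have : y = x + 1 := by omega
        simp [this]
    have hRle : bundleVal (v none) ((A none).filter (fun g => ¬ g.isLeft)) ≤
        ((k:ℚ) - 1) * T := by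
      have h1 : bundleVal (v none) ((A none).filter (fun g => ¬ g.isLeft)) ≤
          bundleVal (v none) {Sum.inr (x + 1)} :=
        Finset.sum_le_sum_of_subset_of_nonneg hRsub (fun g _ _ => hvnn none g)
      have h2 : bundleVal (v none) {Sum.inr (x + 1)} ≤ ((k:ℚ) - 1) * T := by
        rw [bundleVal, Finset.sum_singleton]
        have : ∀ y : Fin 2, v none (Sum.inr y) ≤ ((k:ℚ) - 1) * T := by
          intro y; fin_cases y <;> simp only [hv, vStrong] <;> nlinarith
        exact this _
      linarith
    rw [hsplit, hLsum L (Finset.Subset.refl L)]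
    linarith
  -- hence L has at least two elements
  have hL2 : 2 ≤ L.card := by
    by_contra hc
    push_neg at hc
    have hcq : (L.card : ℚ) ≤ 1 := by exact_mod_cast Nat.lt_succ_iff.1 hc
    have h5 : (L.card : ℚ) * (2 * (k:ℚ) * T) ≤ 2 * (k:ℚ) * T :=
      mul_le_of_le_one_left (by positivity) hcq
    nlinarith [mul_pos hK0 hT0]
  -- agent 0's bundle is nonempty
  have hne : A none ≠ ∅ := by
    intro h
    have : L = ∅ := by
      rw [hL, h]; rfl
    rw [this] at hL2; simp at hL2
  -- EQ1 for the pair (0, j)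
  obtain ⟨g, hg, hle⟩ := heq1 none (some j) hne
  -- lower bound on agent 0's value after removing g
  have hlow : 2 * (k:ℚ) * T ≤ bundleVal (v none) ((A none).erase g) := by
    have hsub : L.erase g ⊆ (A none).erase g :=
      Finset.erase_subset_erase g (Finset.filter_subset _ _)
    have h1 : bundleVal (v none) (L.erase g) ≤ bundleVal (v none) ((A none).erase g) :=
      Finset.sum_le_sum_of_subset_of_nonneg hsub (fun g' _ _ => hvnn none g')
    have h2 : bundleVal (v none) (L.erase g) = (L.erase g).card * (2 * (k:ℚ) * T) :=
      hLsum _ (Finset.erase_subset g L)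
    have h3 : 1 ≤ (L.erase g).card := by
      have := Finset.pred_card_le_card_erase (a := g) (s := L)
      omega
    have h4 : (1:ℚ) ≤ ((L.erase g).card : ℚ) := by exact_mod_cast h3
    have h5 : 2 * (k:ℚ) * T ≤ ((L.erase g).card : ℚ) * (2 * (k:ℚ) * T) :=
      le_mul_of_one_le_left (by positivity) h4
    linarith
  nlinarith [mul_pos hK0 hT0]
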